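/- Let h be a positive definite Hermitian n×n matrix and F_{ijk} a symmetric complex array. Define R_{i j̄ k l̄} = -(1/4) Σ_{m,n} h^{m n̄} F_{ikm} conj(F_{jln}) and the scalar curvature ρ = (1/4) Σ h^{i ī₁} h^{j j̄₁} h^{k k̄₁} F_{ijk} conj(F_{i₁j₁k₁}). If ρ = 0, then F_{ijk} = 0 for all i, j, k, and consequently R_{i j̄ k l̄} = 0 for all indices. -/

import Mathlib

open Complex Finset ComplexOrder Matrix

private lemma rot3' {ι : Type*} [Fintype ι] {M : Type*} [AddCommMonoid M]
    (f : ι → ι → ι → M) :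
    ∑ x, ∑ y, ∑ c, f x y c = ∑ c, ∑ x, ∑ y, f x y c := by
  calc ∑ x, ∑ y, ∑ c, f x y c = ∑ x, ∑ c, ∑ y, f x y c :=
        Finset.sum_congr rfl fun x _ => Finset.sum_comm
    _ = ∑ c, ∑ x, ∑ y, f x y c := Finset.sum_comm

private lemma rot5' {ι : Type*} [Fintype ι] {M : Type*} [AddCommMonoid M]
    (f : ι → ι → ι → ι → ι → M) :
    ∑ x, ∑ y, ∑ z, ∑ w, ∑ c, f x y z w c = ∑ c, ∑ x, ∑ y, ∑ z, ∑ w, f x y z w c := by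
  calc ∑ x, ∑ y, ∑ z, ∑ w, ∑ c, f x y z w c
      = ∑ x, ∑ y, ∑ c, ∑ z, ∑ w, f x y z w c :=
        Finset.sum_congr rfl fun x _ => Finset.sum_congr rfl fun y _ => rot3' _
    _ = ∑ x, ∑ c, ∑ y, ∑ z, ∑ w, f x y z w c :=
        Finset.sum_congr rfl fun x _ => Finset.sum_comm
    _ = ∑ c, ∑ x, ∑ y, ∑ z, ∑ w, f x y z w c := Finset.sum_comm

private lemma contract' {n : ℕ} {g s : Matrix (Fin n) (Fin n) ℂ}
    (hgexp : ∀ i i', g i i' = ∑ a, s i a * (starRingEnd ℂ) (s i' a))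
    (P Q : Fin n → ℂ) :
    ∑ i, ∑ i', g i i' * (P i * (starRingEnd ℂ) (Q i')) =
      ∑ a, (∑ i, s i a * P i) * (starRingEnd ℂ) (∑ i', s i' a * Q i') := by
  simp only [hgexp, Finset.sum_mul, map_sum, _root_.map_mul, Finset.mul_sum]
  rw [rot3']
  refine Finset.sum_congr rfl fun a _ => ?_
  rw [Finset.sum_comm]
  exact Finset.sum_congr rfl fun i _ => Finset.sum_congr rfl fun i' _ => by ring

private lemma mulVec_zero_cancel {n : ℕ} {A : Matrix (Fin n) (Fin n) ℂ} (hA : IsUnit A.det)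
    {x : Fin n → ℂ} (hx : A.mulVec x = 0) : x = 0 := by
  have h2 : A⁻¹.mulVec (A.mulVec x) = 0 := by rw [hx, Matrix.mulVec_zero]
  rwa [Matrix.mulVec_mulVec, Matrix.nonsing_inv_mul _ hA, Matrix.one_mulVec] at h2

theorem scalar_zero_implies_flat (n : ℕ) (h : Matrix (Fin n) (Fin n) ℂ) (hh : h.PosDef)
    (F : Fin n → Fin n → Fin n → ℂ)
    (hF : ∀ i j k, F i j k = F j i k ∧ F i j k = F i k j)
    (R : Fin n → Fin n → Fin n → Fin n → ℂ)
    (hR : ∀ i j k l, R i j k l =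
      -(1/4) * ∑ m, ∑ m', h⁻¹ m m' * F i k m * (starRingEnd ℂ) (F j l m'))
    (ρ : ℂ)
    (hρ : ρ = (1/4) * ∑ i, ∑ i₁, ∑ j, ∑ j₁, ∑ k, ∑ k₁,
      h⁻¹ i i₁ * h⁻¹ j j₁ * h⁻¹ k k₁ * F i j k * (starRingEnd ℂ) (F i₁ j₁ k₁))
    (hzero : ρ = 0) :
    (∀ i j k, F i j k = 0) ∧ (∀ i j k l, R i j k l = 0) := by
  have hg : (h⁻¹).PosDef := hh.inv
  obtain ⟨s, hherm, hss⟩ : ∃ s : Matrix (Fin n) (Fin n) ℂ, sᴴ = s ∧ s * s = h⁻¹ :=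
    by open scoped MatrixOrder in exact ⟨CFC.sqrt (h⁻¹), (CFC.sqrt_nonneg _).posSemidef.1, CFC.sqrt_mul_sqrt_self _ hg.posSemidef.nonneg⟩
  have hgexp : ∀ i i', h⁻¹ i i' = ∑ a, s i a * (starRingEnd ℂ) (s i' a) := by
    intro i i'
    rw [← hss, Matrix.mul_apply]
    refine Finset.sum_congr rfl fun a _ => ?_
    congr 1
    conv_lhs => rw [← hherm]
    simp [Matrix.conjTranspose_apply]
  -- the main identity
  have key : ∑ i, ∑ i₁, ∑ j, ∑ j₁, ∑ k, ∑ k₁,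
      h⁻¹ i i₁ * h⁻¹ j j₁ * h⁻¹ k k₁ * F i j k * (starRingEnd ℂ) (F i₁ j₁ k₁)
      = ∑ c, ∑ b, ∑ a,
          (∑ i, s i a * ∑ j, s j b * ∑ k, s k c * F i j k) *
            (starRingEnd ℂ) (∑ i, s i a * ∑ j, s j b * ∑ k, s k c * F i j k) := by
    calc ∑ i, ∑ i₁, ∑ j, ∑ j₁, ∑ k, ∑ k₁,
        h⁻¹ i i₁ * h⁻¹ j j₁ * h⁻¹ k k₁ * F i j k * (starRingEnd ℂ) (F i₁ j₁ k₁)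
        = ∑ i, ∑ i₁, ∑ j, ∑ j₁, ∑ c,
            h⁻¹ i i₁ * h⁻¹ j j₁ *
              ((∑ k, s k c * F i j k) * (starRingEnd ℂ) (∑ k₁, s k₁ c * F i₁ j₁ k₁)) := by
          refine Finset.sum_congr rfl fun i _ => Finset.sum_congr rfl fun i₁ _ =>
            Finset.sum_congr rfl fun j _ => Finset.sum_congr rfl fun j₁ _ => ?_
          have e1 : ∑ k, ∑ k₁,
              h⁻¹ i i₁ * h⁻¹ j j₁ * h⁻¹ k k₁ * F i j k * (starRingEnd ℂ) (F i₁ j₁ k₁)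
              = h⁻¹ i i₁ * h⁻¹ j j₁ *
                ∑ k, ∑ k₁, h⁻¹ k k₁ * (F i j k * (starRingEnd ℂ) (F i₁ j₁ k₁)) := by
            rw [Finset.mul_sum]
            refine Finset.sum_congr rfl fun k _ => ?_
            rw [Finset.mul_sum]
            exact Finset.sum_congr rfl fun k₁ _ => by ring
          rw [e1, contract' hgexp (fun k => F i j k) (fun k => F i₁ j₁ k), Finset.mul_sum]
      _ = ∑ c, ∑ i, ∑ i₁, ∑ j, ∑ j₁,
            h⁻¹ i i₁ * h⁻¹ j j₁ *
              ((∑ k, s k c * F i j k) * (starRingEnd ℂ) (∑ k₁, s k₁ c * F i₁ j₁ k₁)) :=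
          rot5' _
      _ = ∑ c, ∑ i, ∑ i₁, ∑ b,
            h⁻¹ i i₁ *
              ((∑ j, s j b * ∑ k, s k c * F i j k) *
                (starRingEnd ℂ) (∑ j₁, s j₁ b * ∑ k₁, s k₁ c * F i₁ j₁ k₁)) := by
          refine Finset.sum_congr rfl fun c _ => Finset.sum_congr rfl fun i _ =>
            Finset.sum_congr rfl fun i₁ _ => ?_
          have e2 : ∑ j, ∑ j₁,
              h⁻¹ i i₁ * h⁻¹ j j₁ *
                ((∑ k, s k c * F i j k) * (starRingEnd ℂ) (∑ k₁, s k₁ c * F i₁ j₁ k₁))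
              = h⁻¹ i i₁ * ∑ j, ∑ j₁, h⁻¹ j j₁ *
                  ((∑ k, s k c * F i j k) * (starRingEnd ℂ) (∑ k₁, s k₁ c * F i₁ j₁ k₁)) := by
            rw [Finset.mul_sum]
            refine Finset.sum_congr rfl fun j _ => ?_
            rw [Finset.mul_sum]
            exact Finset.sum_congr rfl fun j₁ _ => by ring
          rw [e2, contract' hgexp (fun j => ∑ k, s k c * F i j k)
            (fun j => ∑ k, s k c * F i₁ j k), Finset.mul_sum]
      _ = ∑ c, ∑ b, ∑ i, ∑ i₁,
            h⁻¹ i i₁ *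
              ((∑ j, s j b * ∑ k, s k c * F i j k) *
                (starRingEnd ℂ) (∑ j₁, s j₁ b * ∑ k₁, s k₁ c * F i₁ j₁ k₁)) :=
          Finset.sum_congr rfl fun c _ => rot3' _
      _ = ∑ c, ∑ b, ∑ a,
            (∑ i, s i a * ∑ j, s j b * ∑ k, s k c * F i j k) *
              (starRingEnd ℂ) (∑ i, s i a * ∑ j, s j b * ∑ k, s k c * F i j k) :=
          Finset.sum_congr rfl fun c _ => Finset.sum_congr rfl fun b _ =>
            contract' hgexp (fun i => ∑ j, s j b * ∑ k, s k c * F i j k)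
              (fun i => ∑ j, s j b * ∑ k, s k c * F i j k)
  -- from ρ = 0 deduce the sum of squares vanishes
  have hsum0 : ∑ c, ∑ b, ∑ a,
      (∑ i, s i a * ∑ j, s j b * ∑ k, s k c * F i j k) *
        (starRingEnd ℂ) (∑ i, s i a * ∑ j, s j b * ∑ k, s k c * F i j k) = 0 := by
    rw [← key]
    have h0 := hzero
    rw [hρ] at h0
    have h4 : (1/4 : ℂ) ≠ 0 := by norm_num
    exact (mul_eq_zero.mp h0).resolve_left h4
  -- each contracted component vanishes
  have hΨ0 : ∀ a b c, ∑ i, s i a * ∑ j, s j b * ∑ k, s k c * F i j k = 0 := by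
    have hnn : ∀ z : ℂ, 0 ≤ z * (starRingEnd ℂ) z := fun z => mul_star_self_nonneg z
    intro a b c
    have h1 : ∀ c ∈ Finset.univ (α := Fin n), (0:ℂ) ≤ ∑ b, ∑ a,
        (∑ i, s i a * ∑ j, s j b * ∑ k, s k c * F i j k) *
          (starRingEnd ℂ) (∑ i, s i a * ∑ j, s j b * ∑ k, s k c * F i j k) := fun c _ =>
      Finset.sum_nonneg fun b _ => Finset.sum_nonneg fun a _ => hnn _
    have h2 := (Finset.sum_eq_zero_iff_of_nonneg h1).mp hsum0 c (Finset.mem_univ c)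
    have h3 : ∀ b ∈ Finset.univ (α := Fin n), (0:ℂ) ≤ ∑ a,
        (∑ i, s i a * ∑ j, s j b * ∑ k, s k c * F i j k) *
          (starRingEnd ℂ) (∑ i, s i a * ∑ j, s j b * ∑ k, s k c * F i j k) := fun b _ =>
      Finset.sum_nonneg fun a _ => hnn _
    have h4 := (Finset.sum_eq_zero_iff_of_nonneg h3).mp h2 b (Finset.mem_univ b)
    have h5 := (Finset.sum_eq_zero_iff_of_nonneg
      (fun a _ => hnn _)).mp h4 a (Finset.mem_univ a)
    rcases mul_eq_zero.mp h5 with h6 | h6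
    · exact h6
    · have h7 := congrArg (starRingEnd ℂ) h6
      simpa only [Complex.conj_conj, map_zero] using h7
  -- s is invertible
  have hdetg : (h⁻¹).det ≠ 0 := hg.det_pos.ne'
  have hdets : s.det ≠ 0 := by
    intro h0
    apply hdetg
    rw [← hss, Matrix.det_mul, h0, mul_zero]
  have hdetsT : IsUnit (sᵀ.det) := by
    rw [Matrix.det_transpose]
    exact isUnit_iff_ne_zero.mpr hdets
  -- unwind the contractions
  have hH0 : ∀ b c i, ∑ j, s j b * ∑ k, s k c * F i j k = 0 := by
    intro b c i
    have hv : sᵀ.mulVec (fun i => ∑ j, s j b * ∑ k, s k c * F i j k) = 0 := by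
      funext a
      simpa [Matrix.mulVec, dotProduct, Matrix.transpose_apply] using hΨ0 a b c
    exact congrFun (mulVec_zero_cancel hdetsT hv) i
  have hG0 : ∀ c i j, ∑ k, s k c * F i j k = 0 := by
    intro c i j
    have hv : sᵀ.mulVec (fun j => ∑ k, s k c * F i j k) = 0 := by
      funext b
      simpa [Matrix.mulVec, dotProduct, Matrix.transpose_apply] using hH0 b c i
    exact congrFun (mulVec_zero_cancel hdetsT hv) j
  have hF0 : ∀ i j k, F i j k = 0 := by
    intro i j k
    have hv : sᵀ.mulVec (fun k => F i j k) = 0 := by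
      funext c
      simpa [Matrix.mulVec, dotProduct, Matrix.transpose_apply] using hG0 c i j
    exact congrFun (mulVec_zero_cancel hdetsT hv) k
  refine ⟨hF0, fun i j k l => ?_⟩
  simp [hR, hF0]
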